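/- Let L₀, S₀ be n×n real matrices, H an n×n real matrix, W₀ a matrix with P_T W₀ = 0, ‖W₀‖ ≤ 1, and ⟨W₀, H⟩ = ‖P_{T⊥} H‖_*, and F₀ with P_Ω F₀ = 0, ‖F₀‖_∞ ≤ 1, and ⟨F₀, H⟩ = −‖P_{Ω⊥} H‖₁. Then ‖L₀ + H‖_* + λ‖S₀ − H‖₁ ≥ ‖L₀‖_* + λ‖S₀‖₁ + ‖P_{T⊥}H‖_* + λ‖P_{Ω⊥}H‖₁ + ⟨UV* − λ·sgn(S₀), H⟩, where UV* + W₀ is a subgradient of the nuclear norm at L₀ and sgn(S₀) + F₀ is a subgradient of the ℓ¹-norm at S₀. -/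

import Mathlib

open Matrix

noncomputable def frobInner {n : ℕ} (A B : Matrix (Fin n) (Fin n) ℝ) : ℝ :=
  Matrix.trace (Aᵀ * B)

noncomputable def matSpectralNorm {n : ℕ} (A : Matrix (Fin n) (Fin n) ℝ) : ℝ :=
  ‖Matrix.toEuclideanCLM (𝕜 := ℝ) A‖

noncomputable def nuclearNorm {n : ℕ} (A : Matrix (Fin n) (Fin n) ℝ) : ℝ :=
  ∑ i, Real.sqrt ((show (Aᵀ * A).IsHermitian from Matrix.isHermitian_conjTranspose_mul_self A).eigenvalues i)

noncomputable def l1Norm {n : ℕ} (A : Matrix (Fin n) (Fin n) ℝ) : ℝ :=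
  ∑ i, ∑ j, |A i j|

noncomputable def signMatrix {n : ℕ} (A : Matrix (Fin n) (Fin n) ℝ) :
    Matrix (Fin n) (Fin n) ℝ :=
  Matrix.of fun i j => Real.sign (A i j)

def projSupp {n : ℕ} (Ω : Set (Fin n × Fin n)) [DecidablePred (· ∈ Ω)]
    (M : Matrix (Fin n) (Fin n) ℝ) : Matrix (Fin n) (Fin n) ℝ :=
  Matrix.of fun i j => if (i, j) ∈ Ω then M i j else 0

def projT {n r : ℕ} (U V : Matrix (Fin n) (Fin r) ℝ)
    (M : Matrix (Fin n) (Fin n) ℝ) : Matrix (Fin n) (Fin n) ℝ :=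
  U * Uᵀ * M + M * (V * Vᵀ) - U * Uᵀ * M * (V * Vᵀ)


lemma frobInner_add {n : ℕ} (A B C : Matrix (Fin n) (Fin n) ℝ) :
    frobInner (A + B) C = frobInner A C + frobInner B C := by
  simp [frobInner, Matrix.transpose_add, Matrix.add_mul, Matrix.trace_add]

lemma frobInner_sub {n : ℕ} (A B C : Matrix (Fin n) (Fin n) ℝ) :
    frobInner (A - B) C = frobInner A C - frobInner B C := by
  simp [frobInner, Matrix.transpose_sub, Matrix.sub_mul, Matrix.trace_sub]

lemma frobInner_smul {n : ℕ} (c : ℝ) (A B : Matrix (Fin n) (Fin n) ℝ) :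
    frobInner (c • A) B = c * frobInner A B := by
  simp [frobInner, Matrix.transpose_smul, Matrix.smul_mul, Matrix.trace_smul]

/-- subgradient lower bound for the PCP objective. -/
theorem pcp_subgradient_bound {n r : ℕ}
    (L₀ S₀ H W₀ F₀ : Matrix (Fin n) (Fin n) ℝ)
    (U V : Matrix (Fin n) (Fin r) ℝ)
    (hU : Uᵀ * U = 1) (hV : Vᵀ * V = 1)
    (Ω : Set (Fin n × Fin n)) [DecidablePred (· ∈ Ω)]
    (hΩ : Ω = {p : Fin n × Fin n | S₀ p.1 p.2 ≠ 0})
    (lam : ℝ) (hlam : 0 < lam)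
    -- W₀ : P_T W₀ = 0, ‖W₀‖ ≤ 1, ⟨W₀, H⟩ = ‖P_{T⊥} H‖_*
    (hW₀T : projT U V W₀ = 0)
    (hW₀norm : matSpectralNorm W₀ ≤ 1)
    (hW₀H : frobInner W₀ H = nuclearNorm (H - projT U V H))
    -- F₀ : P_Ω F₀ = 0, ‖F₀‖_∞ ≤ 1, ⟨F₀, H⟩ = -‖P_{Ω⊥} H‖₁
    (hF₀Ω : projSupp Ω F₀ = 0)
    (hF₀norm : ∀ i j, |F₀ i j| ≤ 1)
    (hF₀H : frobInner F₀ H = -(l1Norm (H - projSupp Ω H)))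
    -- UV* + W₀ is a subgradient of the nuclear norm at L₀
    (hsubNuc : ∀ H' : Matrix (Fin n) (Fin n) ℝ,
      nuclearNorm (L₀ + H') ≥ nuclearNorm L₀ + frobInner (U * Vᵀ + W₀) H')
    -- sgn(S₀) + F₀ is a subgradient of the ℓ¹ norm at S₀
    (hsubL1 : ∀ H' : Matrix (Fin n) (Fin n) ℝ,
      l1Norm (S₀ - H') ≥ l1Norm S₀ - frobInner (signMatrix S₀ + F₀) H') :
    nuclearNorm (L₀ + H) + lam * l1Norm (S₀ - H) ≥
      nuclearNorm L₀ + lam * l1Norm S₀ +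
        nuclearNorm (H - projT U V H) + lam * l1Norm (H - projSupp Ω H) +
        frobInner (U * Vᵀ - lam • signMatrix S₀) H := by
  have h1 := hsubNuc H
  have h2 := hsubL1 H
  rw [frobInner_add] at h1 h2
  rw [frobInner_sub, frobInner_smul]
  rw [hW₀H] at h1
  rw [hF₀H] at h2
  nlinarith [hlam.le]
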